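/- Let L > 0 and let u : ℝ → ℝ be three times continuously differentiable on [0,L] with u(0) = u(L) = 0 and u′(L) = 0. Then ∫₀^L u′(x)² dx ≤ 2 ∫₀^L (u′(x) + u″′(x))² dx + (8L²/5) ∫₀^L u(x)² dx. -/

import Mathlib

open Set intervalIntegral

/-- FTC on `[0,L]` from `HasDerivWithinAt` on the closed interval. -/
lemma kdv_ftc_icc {L : ℝ} (hL : 0 < L) {F f : ℝ → ℝ}
    (hd : ∀ x ∈ Set.Icc (0:ℝ) L, HasDerivWithinAt F (f x) (Set.Icc 0 L) x)
    (hc : ContinuousOn f (Set.Icc 0 L)) :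
    ∫ x in (0:ℝ)..L, f x = F L - F 0 := by
  apply intervalIntegral.integral_eq_sub_of_hasDeriv_right_of_le hL.le
  · exact fun x hx => (hd x hx).continuousWithinAt
  · intro x hx
    exact (hd x ⟨hx.1.le, hx.2.le⟩).mono_of_mem_nhdsWithin
      (Icc_mem_nhdsGT_of_mem ⟨hx.1.le, hx.2⟩)
  · exact hc.intervalIntegrable_of_Icc hL.le

theorem kdv_graph_norm_H1_bound (L : ℝ) (hL : 0 < L) (u u₁ u₂ u₃ : ℝ → ℝ)
    (hu₁ : ∀ x ∈ Set.Icc (0:ℝ) L, HasDerivWithinAt u (u₁ x) (Set.Icc 0 L) x)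
    (hu₂ : ∀ x ∈ Set.Icc (0:ℝ) L, HasDerivWithinAt u₁ (u₂ x) (Set.Icc 0 L) x)
    (hu₃ : ∀ x ∈ Set.Icc (0:ℝ) L, HasDerivWithinAt u₂ (u₃ x) (Set.Icc 0 L) x)
    (hu₃cont : ContinuousOn u₃ (Set.Icc 0 L))
    (hbc0 : u 0 = 0) (hbcL : u L = 0) (hbc1 : u₁ L = 0) :
    ∫ x in (0:ℝ)..L, (u₁ x)^2
      ≤ 2 * (∫ x in (0:ℝ)..L, (u₁ x + u₃ x)^2)
        + (8 * L^2 / 5) * ∫ x in (0:ℝ)..L, (u x)^2 := by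
  have hcu : ContinuousOn u (Set.Icc 0 L) := fun x hx => (hu₁ x hx).continuousWithinAt
  have hcu1 : ContinuousOn u₁ (Set.Icc 0 L) := fun x hx => (hu₂ x hx).continuousWithinAt
  have hcu2 : ContinuousOn u₂ (Set.Icc 0 L) := fun x hx => (hu₃ x hx).continuousWithinAt
  have hcid : ContinuousOn (fun x : ℝ => x) (Set.Icc 0 L) := continuousOn_id
  -- integrability of all the pieces
  have iu : IntervalIntegrable (fun x => (u x)^2) MeasureTheory.volume 0 L :=
    (hcu.pow 2).intervalIntegrable_of_Icc hL.le
  have iu1 : IntervalIntegrable (fun x => (u₁ x)^2) MeasureTheory.volume 0 L :=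
    (hcu1.pow 2).intervalIntegrable_of_Icc hL.le
  have iff2 : IntervalIntegrable (fun x => (u₁ x + u₃ x)^2) MeasureTheory.volume 0 L :=
    ((hcu1.add hu₃cont).pow 2).intervalIntegrable_of_Icc hL.le
  have ixuf : IntervalIntegrable (fun x => x * u x * (u₁ x + u₃ x)) MeasureTheory.volume 0 L :=
    ((hcid.mul hcu).mul (hcu1.add hu₃cont)).intervalIntegrable_of_Icc hL.le
  have ixuu1 : IntervalIntegrable (fun x => x * u x * u₁ x) MeasureTheory.volume 0 L :=
    ((hcid.mul hcu).mul hcu1).intervalIntegrable_of_Icc hL.le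
  set A := ∫ x in (0:ℝ)..L, (u₁ x)^2 with hA
  set B := ∫ x in (0:ℝ)..L, (u x)^2 with hB
  set F := ∫ x in (0:ℝ)..L, (u₁ x + u₃ x)^2 with hF
  set X := ∫ x in (0:ℝ)..L, x * u x * (u₁ x + u₃ x) with hX
  set Y := ∫ x in (0:ℝ)..L, x * u x * u₁ x with hY
  -- first FTC identity:  ∫ (u²/2 + x u (u₁+u₃) - (3/2) u₁²) = 0
  have key1 : (1/2) * B + X - (3/2) * A = 0 := by
    have hd : ∀ x ∈ Set.Icc (0:ℝ) L, HasDerivWithinAt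
        (fun y => y * (u y)^2 / 2 + y * u y * u₂ y - u y * u₁ y - y * (u₁ y)^2 / 2)
        ((1/2) * (u x)^2 + x * u x * (u₁ x + u₃ x) - (3/2) * (u₁ x)^2) (Set.Icc 0 L) x := by
      intro x hx
      have h1 := hu₁ x hx
      have h2 := hu₂ x hx
      have h3 := hu₃ x hx
      have hid : HasDerivWithinAt (fun y : ℝ => y) 1 (Set.Icc 0 L) x :=
        (hasDerivAt_id x).hasDerivWithinAt
      have hD := ((((hid.fun_mul (h1.fun_pow 2)).div_const 2).add
          ((hid.fun_mul h1).fun_mul h3)).sub (h1.fun_mul h2)).sub ((hid.fun_mul (h2.fun_pow 2)).div_const 2)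
      refine hD.congr_deriv ?_
      push_cast
      ring
    have hftc := kdv_ftc_icc hL hd (by
      apply ContinuousOn.sub
      apply ContinuousOn.add
      · exact (continuousOn_const.mul (hcu.pow 2))
      · exact (hcid.mul hcu).mul (hcu1.add hu₃cont)
      · exact continuousOn_const.mul (hcu1.pow 2))
    rw [hbcL, hbc0, hbc1] at hftc
    rw [intervalIntegral.integral_sub ((iu.const_mul _).add ixuf) (iu1.const_mul _),
      intervalIntegral.integral_add (iu.const_mul _) ixuf,
      intervalIntegral.integral_const_mul, intervalIntegral.integral_const_mul] at hftc
    rw [← hA, ← hB, ← hX] at hftc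
    linarith [hftc]
  -- second FTC identity:  ∫ (u² + 2 x u u₁) = 0
  have key2 : B + 2 * Y = 0 := by
    have hd : ∀ x ∈ Set.Icc (0:ℝ) L, HasDerivWithinAt (fun y => y * (u y)^2)
        ((u x)^2 + 2 * (x * u x * u₁ x)) (Set.Icc 0 L) x := by
      intro x hx
      have h1 := hu₁ x hx
      have hid : HasDerivWithinAt (fun y : ℝ => y) 1 (Set.Icc 0 L) x :=
        (hasDerivAt_id x).hasDerivWithinAt
      have hD := hid.fun_mul (h1.fun_pow 2)
      refine hD.congr_deriv ?_
      push_cast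
      ring
    have hftc := kdv_ftc_icc hL hd
      ((hcu.pow 2).add (continuousOn_const.mul ((hcid.mul hcu).mul hcu1)))
    rw [hbcL] at hftc
    rw [intervalIntegral.integral_add iu (ixuu1.const_mul _),
      intervalIntegral.integral_const_mul] at hftc
    rw [← hB, ← hY] at hftc
    linarith [hftc]
  -- nonnegativity
  have hBnn : 0 ≤ B := intervalIntegral.integral_nonneg hL.le (fun x _ => sq_nonneg _)
  have hFnn : 0 ≤ F := intervalIntegral.integral_nonneg hL.le (fun x _ => sq_nonneg _)
  have hAnn : 0 ≤ A := intervalIntegral.integral_nonneg hL.le (fun x _ => sq_nonneg _)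
  -- AM-GM bound for Y :  -(L² u₁² + u²/4) ≤ x u u₁  pointwise
  have key3 : -(L^2 * A + (1/4) * B) ≤ Y := by
    have hmono := intervalIntegral.integral_mono_on hL.le
      (((iu1.const_mul (-(L^2))).add (iu.const_mul (-(1/4)))))
      ixuu1
      (fun x hx => by
        have hx0 : 0 ≤ x := hx.1
        have hxL : x ≤ L := hx.2
        have h2 : x^2 * (u x)^2 ≤ L^2 * (u x)^2 :=
          mul_le_mul_of_nonneg_right (by nlinarith) (sq_nonneg _)
        have h1 : 0 ≤ (2 * L * L * u₁ x + x * u x)^2 := sq_nonneg _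
        have hLL : 0 < L^2 := by positivity
        nlinarith [h1, h2, hLL, mul_pos hLL hLL])
    rw [intervalIntegral.integral_add (iu1.const_mul _) (iu.const_mul _),
      intervalIntegral.integral_const_mul, intervalIntegral.integral_const_mul] at hmono
    rw [← hA, ← hB, ← hY] at hmono
    linarith [hmono]
  -- AM-GM bounds for X with two parameters (division-free form)
  have keyX : ∀ a : ℝ, 0 < a → 4 * a * X ≤ 4 * a^2 * F + L^2 * B := by
    intro a ha
    have hmono := intervalIntegral.integral_mono_on hL.le (ixuf.const_mul (4 * a))
      ((iff2.const_mul (4 * a^2)).add (iu.const_mul (L^2)))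
      (fun x hx => by
        have hx0 : 0 ≤ x := hx.1
        have hxL : x ≤ L := hx.2
        have h2 : x^2 * (u x)^2 ≤ L^2 * (u x)^2 :=
          mul_le_mul_of_nonneg_right (by nlinarith) (sq_nonneg _)
        nlinarith [sq_nonneg (2 * a * (u₁ x + u₃ x) - x * u x), h2, ha])
    rw [intervalIntegral.integral_const_mul,
      intervalIntegral.integral_add (iff2.const_mul _) (iu.const_mul _),
      intervalIntegral.integral_const_mul, intervalIntegral.integral_const_mul] at hmono
    rw [← hF, ← hB, ← hX] at hmono
    linarith [hmono]
  -- conclusion by case analysis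
  have hLB0 : 0 ≤ L^2 * B := mul_nonneg (sq_nonneg L) hBnn
  rcases le_or_gt (L^2) (3/10) with hcase | hcase
  · -- small L : Poincaré  B ≤ 4 L² A  from key2, key3
    have hP : B ≤ 4 * L^2 * A := by linarith [key2, key3]
    have hLA : L^2 * A ≤ (3/10) * A := mul_le_mul_of_nonneg_right hcase hAnn
    have hB65 : B ≤ (6/5) * A := by linarith
    have h4 := keyX (9/5) (by norm_num)
    linarith [h4, key1, hB65, hLB0]
  · -- large L
    have h3 := keyX 3 (by norm_num)
    have hcaseB : (3/10) * B ≤ L^2 * B := mul_le_mul_of_nonneg_right hcase.le hBnn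
    linarith [h3, key1, hcaseB, hLB0]
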